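/- Two Lefschetz thimbles in M_N over vanishing paths γ₁, γ₂ ending at the same critical value j intersect transversally at the critical point q = (0,0,j) (i.e. their tangent planes at q intersect trivially in the 4-real-dimensional tangent space T_q M_N) if and only if γ₁'(1) and γ₂'(1) are not positive real multiples of each other. -/

import Mathlib

open Finset

/-- Square root with branch cut along the positive real axis and `√(-1) = i`. -/
noncomputable def sqrtB (z : ℂ) : ℂ :=
  if z = 0 then 0 else Complex.exp (Complex.log (-z) / 2) * Complex.I

lemma sqrtB_ne_zero {z : ℂ} (hz : z ≠ 0) : sqrtB z ≠ 0 := by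
  simp only [sqrtB, if_neg hz]
  exact mul_ne_zero (Complex.exp_ne_zero _) Complex.I_ne_zero

lemma sqrtB_mul_self (z : ℂ) : sqrtB z * sqrtB z = z := by
  by_cases hz : z = 0
  · simp [sqrtB, hz]
  · simp only [sqrtB, if_neg hz]
    have hnz : (-z) ≠ 0 := neg_ne_zero.mpr hz
    calc Complex.exp (Complex.log (-z) / 2) * Complex.I *
          (Complex.exp (Complex.log (-z) / 2) * Complex.I)
        = Complex.exp (Complex.log (-z) / 2 + Complex.log (-z) / 2) *
            (Complex.I * Complex.I) := by rw [Complex.exp_add]; ring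
      _ = Complex.exp (Complex.log (-z)) * (-1) := by rw [add_halves, Complex.I_mul_I]
      _ = z := by rw [Complex.exp_log hnz]; ring

lemma sqrtB_real_mul_iff {d₁ d₂ : ℂ} (hd₁ : d₁ ≠ 0) (hd₂ : d₂ ≠ 0) :
    (∃ r : ℝ, r ≠ 0 ∧ sqrtB d₂ = (r : ℂ) * sqrtB d₁) ↔
      ∃ t : ℝ, 0 < t ∧ d₂ = (t : ℂ) * d₁ := by
  constructor
  · rintro ⟨r, hr, h⟩
    refine ⟨r ^ 2, by positivity, ?_⟩
    have h2 := sqrtB_mul_self d₂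
    rw [h] at h2
    have h1 := sqrtB_mul_self d₁
    push_cast
    linear_combination -h2 + (r : ℂ) ^ 2 * h1
  · rintro ⟨t, ht, h⟩
    refine ⟨Real.exp (Real.log t / 2), Real.exp_ne_zero _, ?_⟩
    subst h
    have htd : ((t : ℂ) * d₁) ≠ 0 := hd₂
    simp only [sqrtB, if_neg htd, if_neg hd₁]
    have hneg : -((t : ℂ) * d₁) = (t : ℂ) * (-d₁) := by ring
    rw [hneg, Complex.log_ofReal_mul ht (neg_ne_zero.mpr hd₁)]
    have : (↑(Real.log t) + Complex.log (-d₁)) / 2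
        = ((Real.log t / 2 : ℝ) : ℂ) + Complex.log (-d₁) / 2 := by push_cast; ring
    rw [this, Complex.exp_add, ← Complex.ofReal_exp]
    ring

lemma planes_inf_bot_iff {ξ₁ ξ₂ : ℂ} (h1 : ξ₁ ≠ 0) (h2 : ξ₂ ≠ 0) :
    (Submodule.span ℝ ({(ξ₁, ξ₁, 0), (Complex.I * ξ₁, -(Complex.I) * ξ₁, 0)} :
          Set (ℂ × ℂ × ℂ)) ⊓
      Submodule.span ℝ ({(ξ₂, ξ₂, 0), (Complex.I * ξ₂, -(Complex.I) * ξ₂, 0)} :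
          Set (ℂ × ℂ × ℂ)) = ⊥) ↔
      ¬ ∃ r : ℝ, r ≠ 0 ∧ ξ₂ = (r : ℂ) * ξ₁ := by
  constructor
  · intro hbot
    rintro ⟨r, hr, hrξ⟩
    have hmem1 : ((ξ₂, ξ₂, 0) : ℂ × ℂ × ℂ) ∈
        Submodule.span ℝ ({(ξ₁, ξ₁, 0), (Complex.I * ξ₁, -(Complex.I) * ξ₁, 0)} :
          Set (ℂ × ℂ × ℂ)) := by
      apply Submodule.mem_span_pair.mpr
      exact ⟨r, 0, by simp [Prod.ext_iff, Complex.real_smul, hrξ]⟩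
    have hmem2 : ((ξ₂, ξ₂, 0) : ℂ × ℂ × ℂ) ∈
        Submodule.span ℝ ({(ξ₂, ξ₂, 0), (Complex.I * ξ₂, -(Complex.I) * ξ₂, 0)} :
          Set (ℂ × ℂ × ℂ)) :=
      Submodule.subset_span (by simp)
    have : ((ξ₂, ξ₂, 0) : ℂ × ℂ × ℂ) = 0 := by
      have := hbot ▸ (Submodule.mem_inf.mpr ⟨hmem1, hmem2⟩)
      simpa using this
    exact h2 (by simpa [Prod.ext_iff] using this)
  · intro hnr
    rw [Submodule.eq_bot_iff]
    intro x hx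
    obtain ⟨hx1, hx2⟩ := Submodule.mem_inf.mp hx
    obtain ⟨a, b, hab⟩ := Submodule.mem_span_pair.mp hx1
    obtain ⟨a', b', hab'⟩ := Submodule.mem_span_pair.mp hx2
    have h := hab.trans hab'.symm
    simp only [Prod.smul_mk, Prod.mk_add_mk, Prod.ext_iff, Complex.real_smul] at h
    obtain ⟨e1, e2, -⟩ := h
    -- e1 : a*ξ₁ + b*(I*ξ₁) = a'*ξ₂ + b'*(I*ξ₂)
    -- e2 : a*ξ₁ + b*(-I*ξ₁) = a'*ξ₂ + b'*(-I*ξ₂)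
    set w₁ : ℂ := (a : ℂ) + (b : ℂ) * Complex.I with hw₁
    set w₂ : ℂ := (a' : ℂ) + (b' : ℂ) * Complex.I with hw₂
    have eq1 : w₁ * ξ₁ = w₂ * ξ₂ := by rw [hw₁, hw₂]; linear_combination e1
    have eq2 : (starRingEnd ℂ) w₁ * ξ₁ = (starRingEnd ℂ) w₂ * ξ₂ := by
      simp only [hw₁, hw₂, map_add, map_mul, Complex.conj_ofReal, Complex.conj_I]
      linear_combination e2
    have hw2 : w₂ = 0 := by
      by_contra hw2ne
      have hw1ne : w₁ ≠ 0 := by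
        intro h0
        rw [h0, zero_mul] at eq1
        exact hw2ne (by
          rcases mul_eq_zero.mp eq1.symm with h | h
          · exact h
          · exact absurd h h2)
      -- cross-multiply conjugate of eq2 with eq1
      have eq3 : w₁ * (starRingEnd ℂ) ξ₁ = w₂ * (starRingEnd ℂ) ξ₂ := by
        have := congrArg (starRingEnd ℂ) eq2
        simpa [map_mul] using this
      have key : (starRingEnd ℂ) ξ₂ * ξ₁ = ξ₂ * (starRingEnd ℂ) ξ₁ := by
        have hcross : (w₁ * ξ₁) * (w₂ * (starRingEnd ℂ) ξ₂)
            = (w₂ * ξ₂) * (w₁ * (starRingEnd ℂ) ξ₁) := by rw [eq1, eq3]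
        have := mul_left_cancel₀ (mul_ne_zero hw1ne hw2ne)
          (by linear_combination hcross : (w₁ * w₂) * (ξ₁ * (starRingEnd ℂ) ξ₂)
              = (w₁ * w₂) * (ξ₂ * (starRingEnd ℂ) ξ₁))
        linear_combination this
      set z : ℂ := ξ₂ * (starRingEnd ℂ) ξ₁ with hz
      have hzreal : (starRingEnd ℂ) z = z := by
        rw [hz, map_mul, Complex.conj_conj]
        linear_combination key
      have hzne : z ≠ 0 := mul_ne_zero h2 ((map_ne_zero _).mpr h1)
      have hzre : z = ((z.re : ℝ) : ℂ) := (Complex.conj_eq_iff_re.mp hzreal).symm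
      have hnormSq : (Complex.normSq ξ₁ : ℝ) ≠ 0 := by
        simpa [Complex.normSq_eq_zero] using h1
      refine hnr ⟨z.re / Complex.normSq ξ₁, ?_, ?_⟩
      · have hzrene : z.re ≠ 0 := by
          intro h0
          apply hzne
          rw [hzre, h0]; simp
        exact div_ne_zero hzrene hnormSq
      · have hns : ((Complex.normSq ξ₁ : ℝ) : ℂ) = ξ₁ * (starRingEnd ℂ) ξ₁ := by
          rw [Complex.mul_conj]
        push_cast
        rw [div_mul_eq_mul_div, eq_div_iff (by exact_mod_cast hnormSq)]
        rw [hns, ← hzre]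
        rw [hz]; ring
    -- w₂ = 0 forces a' = b' = 0, then w₁ = 0, then x = 0
    have ha'b' : (a' : ℂ) = 0 ∧ (b' : ℂ) = 0 := by
      constructor
      · have : w₂.re = 0 := by rw [hw2]; simp
        simp only [hw₂, Complex.add_re, Complex.ofReal_re, Complex.mul_re,
          Complex.ofReal_im, Complex.I_re, Complex.I_im] at this
        norm_num at this
        exact_mod_cast Complex.ofReal_eq_zero.mpr this
      · have : w₂.im = 0 := by rw [hw2]; simp
        simp only [hw₂, Complex.add_im, Complex.ofReal_im, Complex.mul_im,
          Complex.ofReal_re, Complex.I_re, Complex.I_im] at this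
        norm_num at this
        exact_mod_cast Complex.ofReal_eq_zero.mpr this
    have hw1 : w₁ = 0 := by
      rw [hw2, zero_mul] at eq1
      rcases mul_eq_zero.mp eq1 with h | h
      · exact h
      · exact absurd h h1
    have hab0 : (a : ℂ) = 0 ∧ (b : ℂ) = 0 := by
      constructor
      · have : w₁.re = 0 := by rw [hw1]; simp
        simp only [hw₁, Complex.add_re, Complex.ofReal_re, Complex.mul_re,
          Complex.ofReal_im, Complex.I_re, Complex.I_im] at this
        norm_num at this
        exact Complex.ofReal_eq_zero.mpr this
      · have : w₁.im = 0 := by rw [hw1]; simp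
        simp only [hw₁, Complex.add_im, Complex.ofReal_im, Complex.mul_im,
          Complex.ofReal_re, Complex.I_re, Complex.I_im] at this
        norm_num at this
        exact Complex.ofReal_eq_zero.mpr this
    have ha : a = 0 := by exact_mod_cast hab0.1
    have hb : b = 0 := by exact_mod_cast hab0.2
    rw [← hab, ha, hb]
    simp

/-- Two Lefschetz thimbles over vanishing paths `γ₁, γ₂` ending at the same critical
value `j`, with end-derivatives `d₁ = γ₁'(1)`, `d₂ = γ₂'(1)`, have tangent planes
`P_i = Span_ℝ{(ξᵢ,ξᵢ,0),(iξᵢ,-iξᵢ,0)}` (with `ξᵢ = √dᵢ·∏_{k≠j}√(j-k)`) at the critical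
point intersecting trivially iff `d₁` and `d₂` are not positive real multiples of each
other. -/
theorem thimbles_transverse_iff (N j : ℕ) (hj : j ∈ Finset.Icc 1 N)
    (d₁ d₂ : ℂ) (hd₁ : d₁ ≠ 0) (hd₂ : d₂ ≠ 0) :
    let c : ℂ := ∏ k ∈ (Finset.Icc 1 N).erase j, sqrtB ((j : ℂ) - (k : ℂ))
    let ξ₁ : ℂ := sqrtB d₁ * c
    let ξ₂ : ℂ := sqrtB d₂ * c
    (Submodule.span ℝ ({(ξ₁, ξ₁, 0), (Complex.I * ξ₁, -(Complex.I) * ξ₁, 0)} :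
          Set (ℂ × ℂ × ℂ)) ⊓
      Submodule.span ℝ ({(ξ₂, ξ₂, 0), (Complex.I * ξ₂, -(Complex.I) * ξ₂, 0)} :
          Set (ℂ × ℂ × ℂ)) = ⊥) ↔
      ¬ ∃ t : ℝ, 0 < t ∧ d₂ = (t : ℂ) * d₁ := by
  intro c ξ₁ ξ₂
  have hc : c ≠ 0 := by
    apply Finset.prod_ne_zero_iff.mpr
    intro k hk
    apply sqrtB_ne_zero
    have hkj : k ≠ j := Finset.ne_of_mem_erase hk
    have : (j : ℂ) ≠ (k : ℂ) := by exact_mod_cast (Ne.symm hkj)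
    exact sub_ne_zero.mpr this
  have hξ₁ : ξ₁ ≠ 0 := mul_ne_zero (sqrtB_ne_zero hd₁) hc
  have hξ₂ : ξ₂ ≠ 0 := mul_ne_zero (sqrtB_ne_zero hd₂) hc
  rw [planes_inf_bot_iff hξ₁ hξ₂]
  rw [← sqrtB_real_mul_iff hd₁ hd₂]
  constructor
  · intro h ⟨r, hr, hrs⟩
    exact h ⟨r, hr, by show sqrtB d₂ * c = _ * (sqrtB d₁ * c); rw [hrs]; ring⟩
  · intro h ⟨r, hr, hrs⟩
    refine h ⟨r, hr, ?_⟩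
    have : sqrtB d₂ * c = ((r : ℂ) * sqrtB d₁) * c := by
      rw [show ((r:ℂ) * sqrtB d₁) * c = (r:ℂ) * (sqrtB d₁ * c) from by ring]; exact hrs
    exact mul_right_cancel₀ hc this
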